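/- Let G be any finite simple graph with vertex set {x_1,…,x_n}. Then the cover ideal I(G*)^∨ of the whisker graph G*, regarded in the polynomial ring S = K[x_1,…,x_n,y_1,…,y_n] over a field K, has linear quotients with respect to the decreasing lexicographic order on its minimal monomial generators induced by x_n > y_n > x_{n−1} > y_{n−1} > ⋯ > x_1 > y_1. (This is the case k = 0 of the paper's Corollary 4.3.) -/

import Mathlib

/-- `C` is a vertex cover of the graph `G`. -/
def IsVertexCover {V : Type*} (G : SimpleGraph V) (C : Finset V) : Prop :=
  ∀ ⦃v w : V⦄, G.Adj v w → v ∈ C ∨ w ∈ C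

/-- `C` is a minimal vertex cover of the graph `G`. -/
def IsMinVertexCover {V : Type*} (G : SimpleGraph V) (C : Finset V) : Prop :=
  IsVertexCover G C ∧ ∀ D ⊆ C, IsVertexCover G D → D = C

/-- `C` is an independent set of the graph `G`. -/
def IsIndepSet {V : Type*} (G : SimpleGraph V) (C : Finset V) : Prop :=
  ∀ ⦃v w : V⦄, v ∈ C → w ∈ C → ¬ G.Adj v w

/-- `C` is a maximal independent set of the graph `G`. -/
def IsMaxIndepSet {V : Type*} (G : SimpleGraph V) (C : Finset V) : Prop :=
  IsIndepSet G C ∧ ∀ D, C ⊆ D → IsIndepSet G D → D = C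

/-- A graph on the vertex set `{x_i, y_i : i ∈ ι}` (with `x_i = Sum.inl i` and
`y_i = Sum.inr i`) is in standard Cohen–Macaulay very well-covered form if it satisfies
conditions (i)–(v) of the Crupi–Rinaldo–Terai characterization. -/
def StdCMVWC {ι : Type*} [LinearOrder ι] [Fintype ι] (G : SimpleGraph (ι ⊕ ι)) : Prop :=
  IsMinVertexCover G (Finset.univ.image Sum.inl) ∧
  IsMaxIndepSet G (Finset.univ.image Sum.inr) ∧
  (∀ i : ι, G.Adj (Sum.inl i) (Sum.inr i)) ∧
  (∀ i j : ι, G.Adj (Sum.inl i) (Sum.inr j) → i ≤ j) ∧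
  (∀ i j : ι, G.Adj (Sum.inl i) (Sum.inr j) → ¬ G.Adj (Sum.inl i) (Sum.inl j)) ∧
  (∀ (i j k : ι) (z : ι ⊕ ι), (z = Sum.inl i ∨ z = Sum.inr i) →
    i ≠ j → j ≠ k → i ≠ k →
    G.Adj z (Sum.inl j) → G.Adj (Sum.inr j) (Sum.inl k) → G.Adj z (Sum.inl k))


/-- The whisker graph `G*` of a graph `G` on `{x_1,…,x_n}`: add a new vertex `y_i` and
the whisker edge `x_i y_i` for each `i`. -/
def whisker {n : ℕ} (G : SimpleGraph (Fin n)) : SimpleGraph (Fin n ⊕ Fin n) where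
  Adj v w :=
    (∃ i j, G.Adj i j ∧ v = Sum.inl i ∧ w = Sum.inl j) ∨
    (∃ i, v = Sum.inl i ∧ w = Sum.inr i) ∨
    (∃ i, v = Sum.inr i ∧ w = Sum.inl i)
  symm := ⟨by
    rintro v w (⟨i, j, h, rfl, rfl⟩ | ⟨i, rfl, rfl⟩ | ⟨i, rfl, rfl⟩)
    · exact Or.inl ⟨j, i, h.symm, rfl, rfl⟩
    · exact Or.inr (Or.inr ⟨i, rfl, rfl⟩)
    · exact Or.inr (Or.inl ⟨i, rfl, rfl⟩)⟩
  loopless := ⟨by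
    rintro v (⟨i, j, h, rfl, hw⟩ | ⟨i, rfl, hw⟩ | ⟨i, rfl, hw⟩)
    · obtain rfl : i = j := Sum.inl_injective hw
      exact G.loopless.irrefl i h
    · exact Sum.inl_ne_inr hw
    · exact Sum.inr_ne_inl hw⟩

open MvPolynomial

/-- The variable order `x_n > y_n > x_{n-1} > y_{n-1} > ⋯ > x_1 > y_1`:
`v < w` iff the index of `v` is smaller than that of `w`, or `v = y_i` and `w = x_i`. -/
def varLt {m : ℕ} (v w : Fin m ⊕ Fin m) : Prop :=
  Sum.elim id id v < Sum.elim id id w ∨ ∃ i, v = Sum.inr i ∧ w = Sum.inl i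

/-- `C >_lex D` for the squarefree monomials `∏_{v∈C} v` and `∏_{v∈D} v`, in the
lexicographic order induced by `x_n > y_n > ⋯ > x_1 > y_1`. -/
def CoverLexGT {m : ℕ} (C D : Finset (Fin m ⊕ Fin m)) : Prop :=
  ∃ v, v ∈ C ∧ v ∉ D ∧ ∀ w, varLt v w → (w ∈ C ↔ w ∈ D)


section Aux

open MvPolynomial

variable {n : ℕ}

private lemma whisker_adj_pair (G : SimpleGraph (Fin n)) (i : Fin n) :
    (whisker G).Adj (Sum.inl i) (Sum.inr i) :=
  Or.inr (Or.inl ⟨i, rfl, rfl⟩)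

/-- A minimal vertex cover of the whisker graph contains exactly one of each pair. -/
private lemma min_pair {G : SimpleGraph (Fin n)} {C : Finset (Fin n ⊕ Fin n)}
    (h : IsMinVertexCover (whisker G) C) (i : Fin n) :
    (Sum.inl i ∈ C ∧ Sum.inr i ∉ C) ∨ (Sum.inl i ∉ C ∧ Sum.inr i ∈ C) := by
  classical
  have h1 := h.1 (whisker_adj_pair G i)
  by_cases hx : Sum.inl i ∈ C
  · left
    refine ⟨hx, fun hy => ?_⟩
    have hcov : IsVertexCover (whisker G) (C.erase (Sum.inr i)) := by
      rintro v w (⟨a, b, hab, rfl, rfl⟩ | ⟨a, rfl, rfl⟩ | ⟨a, rfl, rfl⟩)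
      · rcases h.1 (Or.inl ⟨a, b, hab, rfl, rfl⟩ :
            (whisker G).Adj (Sum.inl a) (Sum.inl b)) with hm | hm
        · exact Or.inl (Finset.mem_erase.mpr ⟨by simp, hm⟩)
        · exact Or.inr (Finset.mem_erase.mpr ⟨by simp, hm⟩)
      · by_cases ha : a = i
        · subst ha; exact Or.inl (Finset.mem_erase.mpr ⟨by simp, hx⟩)
        · rcases h.1 (whisker_adj_pair G a) with hm | hm
          · exact Or.inl (Finset.mem_erase.mpr ⟨by simp, hm⟩)
          · exact Or.inr (Finset.mem_erase.mpr ⟨by simp [ha], hm⟩)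
      · by_cases ha : a = i
        · subst ha; exact Or.inr (Finset.mem_erase.mpr ⟨by simp, hx⟩)
        · rcases h.1 (whisker_adj_pair G a) with hm | hm
          · exact Or.inr (Finset.mem_erase.mpr ⟨by simp, hm⟩)
          · exact Or.inl (Finset.mem_erase.mpr ⟨by simp [ha], hm⟩)
    have heq := h.2 _ (Finset.erase_subset _ _) hcov
    exact (Finset.erase_eq_self.mp heq) hy
  · right
    exact ⟨hx, h1.resolve_left hx⟩

/-- A cover of the whisker graph containing exactly one vertex of each pair is minimal. -/
private lemma min_of_exactlyOne {G : SimpleGraph (Fin n)} {C : Finset (Fin n ⊕ Fin n)}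
    (hc : IsVertexCover (whisker G) C)
    (h1 : ∀ i, Sum.inl i ∈ C ∨ Sum.inr i ∈ C)
    (h2 : ∀ i, ¬(Sum.inl i ∈ C ∧ Sum.inr i ∈ C)) :
    IsMinVertexCover (whisker G) C := by
  refine ⟨hc, fun D hD hcov => Finset.Subset.antisymm hD fun v hv => ?_⟩
  match v with
  | Sum.inl i =>
      have hr : Sum.inr i ∉ D := fun hr => h2 i ⟨hv, hD hr⟩
      exact (hcov (whisker_adj_pair G i)).resolve_right hr
  | Sum.inr i =>
      have hl : Sum.inl i ∉ D := fun hl => h2 i ⟨hD hl, hv⟩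
      exact (hcov (whisker_adj_pair G i)).resolve_left hl

private lemma prodX_eq (K : Type*) [Field K] (C : Finset (Fin n ⊕ Fin n)) :
    (∏ v ∈ C, X v : MvPolynomial (Fin n ⊕ Fin n) K)
      = monomial (∑ v ∈ C, Finsupp.single v 1) 1 := by
  classical
  induction C using Finset.induction with
  | empty => simp
  | insert a s h ih =>
      rw [Finset.prod_insert h, Finset.sum_insert h, ih, ← one_mul (1 : K),
        ← MvPolynomial.monomial_mul, one_mul]
      rfl

private lemma sigma_apply (C : Finset (Fin n ⊕ Fin n)) (w : Fin n ⊕ Fin n) :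
    (∑ v ∈ C, Finsupp.single v 1) w = if w ∈ C then 1 else 0 := by
  classical
  rw [Finset.sum_apply']
  simp [Finsupp.single_apply, Finset.sum_ite_eq]

end Aux


/-- The cover ideal of the whisker graph `G*` of any finite simple graph `G` has linear
quotients with respect to the decreasing lexicographic order on its minimal monomial
generators induced by `x_n > y_n > x_{n-1} > y_{n-1} > ⋯ > x_1 > y_1`. -/
theorem stmt11 (n : ℕ) (K : Type*) [Field K] (G : SimpleGraph (Fin n)) :
    ∀ C : Finset (Fin n ⊕ Fin n), IsMinVertexCover (whisker G) C →
      ∃ T : Set (Fin n ⊕ Fin n),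
        Submodule.colon
          (Ideal.span {p : MvPolynomial (Fin n ⊕ Fin n) K |
            ∃ D, IsMinVertexCover (whisker G) D ∧ CoverLexGT D C ∧ p = ∏ v ∈ D, X v})
          ((Ideal.span {∏ v ∈ C, X v} : Ideal (MvPolynomial (Fin n ⊕ Fin n) K)) : Set (MvPolynomial (Fin n ⊕ Fin n) K))
        = Ideal.span ((fun v => (X v : MvPolynomial (Fin n ⊕ Fin n) K)) '' T) := by
  classical
  intro C hC
  set Sgen : Set (MvPolynomial (Fin n ⊕ Fin n) K) :=
    {p | ∃ D, IsMinVertexCover (whisker G) D ∧ CoverLexGT D C ∧ p = ∏ v ∈ D, X v} with hSgen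
  have hSimg : Sgen = (fun s => monomial s (1 : K)) ''
      {s | ∃ D, IsMinVertexCover (whisker G) D ∧ CoverLexGT D C
        ∧ s = ∑ v ∈ D, Finsupp.single v 1} := by
    ext p
    constructor
    · rintro ⟨D, h1, h2, rfl⟩
      exact ⟨_, ⟨D, h1, h2, rfl⟩, (prodX_eq K D).symm⟩
    · rintro ⟨s, ⟨D, h1, h2, rfl⟩, rfl⟩
      exact ⟨D, h1, h2, (prodX_eq K D).symm⟩
  refine ⟨Sum.inl '' {i | Sum.inl i ∉ C}, le_antisymm ?_ ?_⟩
  · -- colon ⊆ span of variables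
    intro f hf
    have hfm : f * ∏ v ∈ C, X v ∈ Ideal.span Sgen := by
      have := Submodule.mem_colon.mp hf (∏ v ∈ C, X v) (Ideal.subset_span rfl)
      simpa [smul_eq_mul] using this
    rw [hSimg, MvPolynomial.mem_ideal_span_monomial_image] at hfm
    rw [MvPolynomial.mem_ideal_span_X_image]
    intro μ hμ
    have hsupp : μ + ∑ v ∈ C, Finsupp.single v 1 ∈ (f * ∏ v ∈ C, X v).support := by
      rw [MvPolynomial.mem_support_iff, prodX_eq K C,
        MvPolynomial.coeff_mul_monomial, mul_one]
      exact MvPolynomial.mem_support_iff.mp hμ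
    obtain ⟨s, ⟨D, hD, hlex, rfl⟩, hle⟩ := hfm _ hsupp
    obtain ⟨v, hvD, hvC, hagree⟩ := hlex
    obtain ⟨i, rfl⟩ : ∃ i, v = Sum.inl i := by
      rcases v with i | i
      · exact ⟨i, rfl⟩
      · exfalso
        have hiC : Sum.inl i ∈ C := ((min_pair hC i).resolve_right
          (fun h => hvC h.2)).1
        have hiD : Sum.inl i ∈ D :=
          (hagree (Sum.inl i) (Or.inr ⟨i, rfl, rfl⟩)).mpr hiC
        rcases min_pair hD i with h | h
        · exact h.2 hvD
        · exact h.1 hiD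
    refine ⟨Sum.inl i, ⟨i, hvC, rfl⟩, ?_⟩
    have hpt := hle (Sum.inl i)
    rw [sigma_apply, if_pos hvD, Finsupp.add_apply, sigma_apply, if_neg hvC] at hpt
    omega
  · -- span of variables ⊆ colon
    rw [Ideal.span_le]
    rintro p ⟨v, ⟨i, hiC, rfl⟩, rfl⟩
    have hiC' : Sum.inr i ∈ C := ((min_pair hC i).resolve_left
      (fun h => hiC h.1)).2
    set D : Finset (Fin n ⊕ Fin n) := insert (Sum.inl i) (C.erase (Sum.inr i)) with hDdef
    have hmemD : ∀ w, w ∈ D ↔ (w = Sum.inl i ∨ (w ≠ Sum.inr i ∧ w ∈ C)) := by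
      intro w; simp [hDdef, Finset.mem_insert, Finset.mem_erase]
    have hDcov : IsVertexCover (whisker G) D := by
      rintro v w (⟨a, b, hab, rfl, rfl⟩ | ⟨a, rfl, rfl⟩ | ⟨a, rfl, rfl⟩)
      · rcases hC.1 (Or.inl ⟨a, b, hab, rfl, rfl⟩ :
            (whisker G).Adj (Sum.inl a) (Sum.inl b)) with hmm | hmm
        · exact Or.inl ((hmemD _).mpr (Or.inr ⟨by simp, hmm⟩))
        · exact Or.inr ((hmemD _).mpr (Or.inr ⟨by simp, hmm⟩))
      · by_cases ha : a = i
        · subst ha; exact Or.inl ((hmemD _).mpr (Or.inl rfl))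
        · rcases hC.1 (whisker_adj_pair G a) with hmm | hmm
          · exact Or.inl ((hmemD _).mpr (Or.inr ⟨by simp, hmm⟩))
          · exact Or.inr ((hmemD _).mpr (Or.inr ⟨by simp [ha], hmm⟩))
      · by_cases ha : a = i
        · subst ha; exact Or.inr ((hmemD _).mpr (Or.inl rfl))
        · rcases hC.1 (whisker_adj_pair G a) with hmm | hmm
          · exact Or.inr ((hmemD _).mpr (Or.inr ⟨by simp, hmm⟩))
          · exact Or.inl ((hmemD _).mpr (Or.inr ⟨by simp [ha], hmm⟩))
    have hDmin : IsMinVertexCover (whisker G) D := by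
      refine min_of_exactlyOne hDcov (fun j => ?_) (fun j => ?_)
      · by_cases hj : j = i
        · subst hj; exact Or.inl ((hmemD _).mpr (Or.inl rfl))
        · rcases min_pair hC j with h | h
          · exact Or.inl ((hmemD _).mpr (Or.inr ⟨by simp, h.1⟩))
          · exact Or.inr ((hmemD _).mpr (Or.inr ⟨by simp [hj], h.2⟩))
      · rintro ⟨hl, hr⟩
        rcases (hmemD _).mp hr with h | h
        · exact Sum.inr_ne_inl h
        · by_cases hj : j = i
          · subst hj; exact h.1 rfl
          · rcases (hmemD _).mp hl with h' | h'
            · exact hj (Sum.inl_injective h')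
            · rcases min_pair hC j with hh | hh
              · exact hh.2 h.2
              · exact hh.1 h'.2
    have hlex : CoverLexGT D C := by
      refine ⟨Sum.inl i, (hmemD _).mpr (Or.inl rfl), hiC, ?_⟩
      rintro w (hlt | ⟨k, hk, _⟩)
      · rcases w with j | j
        · simp only [Sum.elim_inl, id] at hlt
          rw [hmemD]
          constructor
          · rintro (h | h)
            · exact absurd (Sum.inl_injective h) (by omega)
            · exact h.2
          · intro h; exact Or.inr ⟨by simp, h⟩
        · simp only [Sum.elim_inl, Sum.elim_inr, id] at hlt
          rw [hmemD]
          constructor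
          · rintro (h | h)
            · exact (Sum.inr_ne_inl h).elim
            · exact h.2
          · intro h
            refine Or.inr ⟨fun he => ?_, h⟩
            have : j = i := Sum.inr_injective he
            omega
      · exact (Sum.inl_ne_inr hk).elim
    have hprod : (X (Sum.inl i) * ∏ v ∈ C, X v : MvPolynomial (Fin n ⊕ Fin n) K)
        = X (Sum.inr i) * ∏ v ∈ D, X v := by
      have h1 : (∏ v ∈ C, X v : MvPolynomial (Fin n ⊕ Fin n) K)
          = X (Sum.inr i) * ∏ v ∈ C.erase (Sum.inr i), X v :=
        (Finset.mul_prod_erase C _ hiC').symm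
      have h2 : (∏ v ∈ D, X v : MvPolynomial (Fin n ⊕ Fin n) K)
          = X (Sum.inl i) * ∏ v ∈ C.erase (Sum.inr i), X v := by
        rw [hDdef, Finset.prod_insert (fun h => hiC (Finset.mem_of_mem_erase h))]
      rw [h1, h2]; ring
    have hXm : (X (Sum.inl i) * ∏ v ∈ C, X v : MvPolynomial (Fin n ⊕ Fin n) K) ∈ Ideal.span Sgen := by
      rw [hprod]
      exact Ideal.mul_mem_left _ _ (Ideal.subset_span ⟨D, hDmin, hlex, rfl⟩)
    refine SetLike.mem_coe.mpr (Submodule.mem_colon.mpr fun q hq => ?_)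
    obtain ⟨c, rfl⟩ := Ideal.mem_span_singleton'.mp hq
    have heq : (X (Sum.inl i) : MvPolynomial (Fin n ⊕ Fin n) K) • (c * ∏ v ∈ C, X v)
        = c * (X (Sum.inl i) * ∏ v ∈ C, X v) := by
      rw [smul_eq_mul]; ring
    rw [heq]
    exact Ideal.mul_mem_left _ _ hXm
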